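/- For any cube packing CP in dimension d with N cubes, writing N = 4q + r with 0 ≤ r ≤ 3, the second moment satisfies m_2(CP) ≥ m_1(CP) + N(N−1)·2^{−d} + 2^{−d}·d·(2q(q−1) + rq), where m_i(CP) is the average over z ∈ {0,1,2,3}^d of N_z(CP)^i. -/
import Mathlib


/-- Two cube centers in `(ZMod 4)^d` overlap iff no coordinate differs by 2. -/
def Overlap {d : ℕ} (x y : Fin d → ZMod 4) : Prop := ∀ i, x i - y i ≠ 2

/-- A cube packing: pairwise non-overlapping centers. -/
def IsPacking {d : ℕ} (P : Finset (Fin d → ZMod 4)) : Prop :=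
  ∀ x ∈ P, ∀ y ∈ P, x ≠ y → ¬ Overlap x y

/-- `N_z(P)`: number of 2-cubes of `P` contained in the 4-cube `z + [0,4)^d`,
i.e. centers `b` with `z i ≠ b i` for every coordinate. -/
def countIn {d : ℕ} (P : Finset (Fin d → ZMod 4)) (z : Fin d → ZMod 4) : ℕ :=
  (P.filter (fun b => ∀ i, z i ≠ b i)).card

/-- The `k`-th moment of a cube packing: average of `N_z(P)^k`. -/
noncomputable def moment {d : ℕ} (P : Finset (Fin d → ZMod 4)) (k : ℕ) : ℝ :=
  (1 / 4 ^ d) * ∑ z : Fin d → ZMod 4, (countIn P z : ℝ) ^ k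

/-! ### Auxiliary lemmas -/

lemma zmod4_count (a b : ZMod 4) :
    (Finset.univ.filter (fun v : ZMod 4 => v ≠ a ∧ v ≠ b)).card = if a = b then 3 else 2 := by
  revert a b; decide

lemma pair_count {d : ℕ} (b c : Fin d → ZMod 4) :
    ((Finset.univ : Finset (Fin d → ZMod 4)).filter
      (fun z => ∀ i, z i ≠ b i ∧ z i ≠ c i)).card
      = ∏ i, (if b i = c i then 3 else 2) := by
  rw [← Fintype.card_subtype,
    Fintype.card_congr (Equiv.subtypePiEquivPi (p := fun i v => v ≠ b i ∧ v ≠ c i)),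
    Fintype.card_pi]
  refine Finset.prod_congr rfl fun i _ => ?_
  rw [Fintype.card_subtype, zmod4_count]

lemma k_mul_k_sub_one (k : ℤ) : 0 ≤ k * (k - 1) := by
  rcases le_or_gt k 0 with h | h
  · nlinarith
  · have h1 : 1 ≤ k := h
    nlinarith

lemma sq_lb (n q : ℕ) : (q : ℝ)^2 + (2*q+1) * ((n:ℝ) - q) ≤ (n:ℝ)^2 := by
  have h := k_mul_k_sub_one ((n : ℤ) - q)
  have h2 : (0:ℝ) ≤ ((n:ℝ) - q) * (((n:ℝ) - q) - 1) := by exact_mod_cast h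
  nlinarith

/-- Real-valued weight of a pair of centers. -/
noncomputable def Wr {d : ℕ} (b c : Fin d → ZMod 4) : ℝ :=
  ∏ i, (if b i = c i then (3:ℝ) else 2)

lemma countIn_eq_sum {d : ℕ} (P : Finset (Fin d → ZMod 4)) (z : Fin d → ZMod 4) :
    (countIn P z : ℝ) = ∑ b ∈ P, if (∀ i, z i ≠ b i) then (1:ℝ) else 0 := by
  rw [countIn, Finset.sum_boole]

lemma zsum_pair {d : ℕ} (b c : Fin d → ZMod 4) :
    ∑ z : Fin d → ZMod 4,
      ((if (∀ i, z i ≠ b i) then (1:ℝ) else 0) * (if (∀ i, z i ≠ c i) then (1:ℝ) else 0))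
      = Wr b c := by
  have h1 : ∀ z : Fin d → ZMod 4,
      ((if (∀ i, z i ≠ b i) then (1:ℝ) else 0) * (if (∀ i, z i ≠ c i) then (1:ℝ) else 0))
      = if (∀ i, z i ≠ b i ∧ z i ≠ c i) then (1:ℝ) else 0 := by
    intro z
    rw [ite_zero_mul_ite_zero, mul_one]
    exact if_congr forall_and.symm rfl rfl
  simp_rw [h1]
  rw [Finset.sum_boole, pair_count]
  rw [Wr]
  push_cast
  exact Finset.prod_congr rfl fun i _ => by split <;> norm_num

lemma S1_eq {d : ℕ} (P : Finset (Fin d → ZMod 4)) :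
    ∑ z : Fin d → ZMod 4, (countIn P z : ℝ) ^ 1 = P.card * 3 ^ d := by
  simp_rw [pow_one, countIn_eq_sum]
  rw [Finset.sum_comm]
  have : ∀ b ∈ P, ∑ z : Fin d → ZMod 4, (if (∀ i, z i ≠ b i) then (1:ℝ) else 0) = 3 ^ d := by
    intro b _
    have := zsum_pair b b
    simp only [Wr, if_pos rfl, Finset.prod_const, Finset.card_univ, Fintype.card_fin] at this
    calc ∑ z : Fin d → ZMod 4, (if (∀ i, z i ≠ b i) then (1:ℝ) else 0)
        = ∑ z : Fin d → ZMod 4,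
          ((if (∀ i, z i ≠ b i) then (1:ℝ) else 0) * (if (∀ i, z i ≠ b i) then (1:ℝ) else 0)) := by
          refine Finset.sum_congr rfl fun z _ => ?_
          split <;> norm_num
      _ = 3 ^ d := this
  rw [Finset.sum_congr rfl this, Finset.sum_const, nsmul_eq_mul]

lemma S2_eq {d : ℕ} (P : Finset (Fin d → ZMod 4)) :
    ∑ z : Fin d → ZMod 4, (countIn P z : ℝ) ^ 2
      = ∑ z : Fin d → ZMod 4, (countIn P z : ℝ) ^ 1 + ∑ p ∈ P.offDiag, Wr p.1 p.2 := by
  have key : ∑ z : Fin d → ZMod 4, (countIn P z : ℝ) ^ 2 = ∑ p ∈ P ×ˢ P, Wr p.1 p.2 := by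
    simp_rw [sq, countIn_eq_sum, Finset.sum_mul_sum]
    rw [Finset.sum_comm, Finset.sum_product]
    refine Finset.sum_congr rfl fun b _ => ?_
    rw [Finset.sum_comm]
    exact Finset.sum_congr rfl fun c _ => zsum_pair b c
  rw [key, ← Finset.diag_union_offDiag P, Finset.sum_union (Finset.disjoint_diag_offDiag P),
    Finset.sum_diag, S1_eq]
  congr 1
  have : ∀ b ∈ P, Wr b b = (3:ℝ)^d := by
    intro b _
    simp [Wr, Finset.prod_const]
  rw [Finset.sum_congr rfl this, Finset.sum_const, nsmul_eq_mul]

lemma Wr_lb {d : ℕ} (b c : Fin d → ZMod 4) :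
    (2:ℝ)^d + ((Finset.univ.filter fun i => b i = c i).card : ℝ) * (2:ℝ)^d / 2 ≤ Wr b c := by
  classical
  set e : ℕ := (Finset.univ.filter fun i => b i = c i).card with he
  have hWr : Wr b c = 2^d * (3/2 : ℝ)^e := by
    rw [Wr, Finset.prod_ite, Finset.prod_const, Finset.prod_const, ← he]
    have hd : e + (Finset.univ.filter fun i => ¬ b i = c i).card = d := by
      rw [he, Finset.card_filter_add_card_filter_not, Finset.card_univ,
        Fintype.card_fin]
    have h2d : (2:ℝ)^d = 2^e * 2^((Finset.univ.filter fun i => ¬ b i = c i).card) := by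
      rw [← pow_add, hd]
    rw [h2d]
    have h32 : (3:ℝ)^e = 2^e * (3/2)^e := by
      rw [← mul_pow]; norm_num
    rw [h32]; ring
  have hb : (1:ℝ) + e * (1/2) ≤ (3/2 : ℝ)^e := by
    have := one_add_mul_le_pow (a := (1/2 : ℝ)) (by norm_num) e
    norm_num at this ⊢
    convert this using 2
  have h2 : (0:ℝ) < 2^d := by positivity
  rw [hWr]
  nlinarith

lemma E_lb {d N q r : ℕ} (P : Finset (Fin d → ZMod 4)) (hN : P.card = N)
    (hqr : N = 4 * q + r) (i : Fin d) :
    (4*q^2 - 4*q + 2*q*r : ℝ) ≤ ((P.offDiag.filter fun p => p.1 i = p.2 i).card : ℝ) := by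
  classical
  set n : ZMod 4 → ℕ := fun v => (P.filter fun b => b i = v).card with hn
  have hfib : ∀ (f : (Fin d → ZMod 4) → ℝ),
      ∑ v : ZMod 4, ∑ b ∈ P.filter (fun b => b i = v), f b = ∑ b ∈ P, f b :=
    fun f => Finset.sum_fiberwise P (fun b => b i) f
  have hsum : ∑ v : ZMod 4, (n v : ℝ) = N := by
    have := hfib (fun _ => (1:ℝ))
    simpa [Finset.sum_const, hN] using this
  have htot : ∑ p ∈ P ×ˢ P, (if p.1 i = p.2 i then (1:ℝ) else 0)
      = ∑ v : ZMod 4, (n v : ℝ)^2 := by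
    rw [Finset.sum_product]
    have hinner : ∀ b ∈ P, ∑ c ∈ P, (if b i = c i then (1:ℝ) else 0) = (n (b i) : ℝ) := by
      intro b _
      rw [Finset.sum_boole]
      norm_cast
      simp only [hn]
      exact congrArg Finset.card (Finset.filter_congr fun c _ => eq_comm)
    rw [Finset.sum_congr rfl hinner, ← hfib (fun b => (n (b i) : ℝ))]
    refine Finset.sum_congr rfl fun v _ => ?_
    have : ∀ b ∈ P.filter (fun b => b i = v), (n (b i) : ℝ) = (n v : ℝ) := by
      intro b hb
      rw [(Finset.mem_filter.mp hb).2]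
    rw [Finset.sum_congr rfl this, Finset.sum_const]
    simp [sq, hn]
  have hsplit : ∑ p ∈ P ×ˢ P, (if p.1 i = p.2 i then (1:ℝ) else 0)
      = N + ((P.offDiag.filter fun p => p.1 i = p.2 i).card : ℝ) := by
    rw [← Finset.diag_union_offDiag P, Finset.sum_union (Finset.disjoint_diag_offDiag P),
      Finset.sum_diag, Finset.sum_boole]
    simp [hN]
  have hlb : (4*q^2 + (2*q+1)*r : ℝ) ≤ ∑ v : ZMod 4, (n v : ℝ)^2 := by
    have h1 : ∑ v : ZMod 4, ((q : ℝ)^2 + (2*q+1) * ((n v:ℝ) - q)) ≤ ∑ v : ZMod 4, (n v : ℝ)^2 :=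
      Finset.sum_le_sum fun v _ => sq_lb (n v) q
    have h2 : ∑ v : ZMod 4, ((q : ℝ)^2 + (2*q+1) * ((n v:ℝ) - q))
        = 4*(q:ℝ)^2 + (2*q+1) * ((N:ℝ) - 4*q) := by
      rw [Finset.sum_add_distrib, Finset.sum_const, ← Finset.mul_sum]
      have hc : (Finset.univ : Finset (ZMod 4)).card = 4 := rfl
      have : ∑ v : ZMod 4, ((n v:ℝ) - q) = (N:ℝ) - 4*q := by
        rw [Finset.sum_sub_distrib, hsum, Finset.sum_const, hc]
        ring
      rw [this, hc]
      ring
    have hNr : (N:ℝ) = 4*q + r := by exact_mod_cast congrArg (Nat.cast : ℕ → ℝ) hqr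
    calc (4*(q:ℝ)^2 + (2*q+1)*r : ℝ) = 4*(q:ℝ)^2 + (2*q+1) * ((N:ℝ) - 4*q) := by
          rw [hNr]; ring
      _ = ∑ v : ZMod 4, ((q : ℝ)^2 + (2*q+1) * ((n v:ℝ) - q)) := h2.symm
      _ ≤ _ := h1
  have hNr : (N:ℝ) = 4*q + r := by exact_mod_cast congrArg (Nat.cast : ℕ → ℝ) hqr
  nlinarith [htot, hsplit, hlb, hNr]

theorem second_moment_lower_bound (d N q r : ℕ) (P : Finset (Fin d → ZMod 4))
    (hP : IsPacking P) (hN : P.card = N) (hqr : N = 4 * q + r) (hr : r ≤ 3) :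
    moment P 1 + (N : ℝ) * (N - 1) * 2 ^ (-(d : ℤ)) +
        2 ^ (-(d : ℤ)) * d * (2 * q * (q - 1) + r * q) ≤
      moment P 2 := by
  classical
  set A : ℝ := 2 ^ d with hA
  have hApos : (0:ℝ) < A := by positivity
  -- the sum over off-diagonal pairs
  set T : ℝ := ∑ p ∈ P.offDiag, Wr p.1 p.2 with hT
  -- lower bound on T
  have hoffcard : ((P.offDiag.card : ℝ)) = (N:ℝ) * ((N:ℝ) - 1) := by
    rw [Finset.offDiag_card, hN]
    have hle : N ≤ N * N := by nlinarith
    push_cast [Nat.cast_sub hle]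
    ring
  -- sum of coincidence counts
  have hesum : ∑ p ∈ P.offDiag, ((Finset.univ.filter fun i => p.1 i = p.2 i).card : ℝ)
      = ∑ i : Fin d, ((P.offDiag.filter fun p => p.1 i = p.2 i).card : ℝ) := by
    have h1 : ∀ p : (Fin d → ZMod 4) × (Fin d → ZMod 4),
        ((Finset.univ.filter fun i => p.1 i = p.2 i).card : ℝ)
        = ∑ i : Fin d, (if p.1 i = p.2 i then (1:ℝ) else 0) := by
      intro p; rw [Finset.sum_boole]
    simp_rw [h1]
    rw [Finset.sum_comm]
    exact Finset.sum_congr rfl fun i _ => by rw [Finset.sum_boole]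
  have hEi : ∀ i : Fin d,
      (4*(q:ℝ)^2 - 4*q + 2*q*r : ℝ) ≤ ((P.offDiag.filter fun p => p.1 i = p.2 i).card : ℝ) :=
    fun i => E_lb P hN hqr i
  have hTlb : (N:ℝ) * ((N:ℝ) - 1) * A + (A/2) * (d * (4*(q:ℝ)^2 - 4*q + 2*q*r)) ≤ T := by
    have h1 : ∑ p ∈ P.offDiag,
        (A + ((Finset.univ.filter fun i => p.1 i = p.2 i).card : ℝ) * A / 2) ≤ T :=
      Finset.sum_le_sum fun p _ => Wr_lb p.1 p.2
    have h2 : ∑ p ∈ P.offDiag,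
        (A + ((Finset.univ.filter fun i => p.1 i = p.2 i).card : ℝ) * A / 2)
        = (P.offDiag.card : ℝ) * A
          + (A/2) * ∑ i : Fin d, ((P.offDiag.filter fun p => p.1 i = p.2 i).card : ℝ) := by
      rw [Finset.sum_add_distrib, Finset.sum_const, ← hesum, nsmul_eq_mul]
      rw [← Finset.sum_div, ← Finset.sum_mul]
      ring
    have h3 : d * (4*(q:ℝ)^2 - 4*q + 2*q*r)
        ≤ ∑ i : Fin d, ((P.offDiag.filter fun p => p.1 i = p.2 i).card : ℝ) := by
      calc d * (4*(q:ℝ)^2 - 4*q + 2*q*r)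
          = ∑ _i : Fin d, (4*(q:ℝ)^2 - 4*q + 2*q*r) := by
            rw [Finset.sum_const, Finset.card_univ, Fintype.card_fin, nsmul_eq_mul]
        _ ≤ _ := Finset.sum_le_sum fun i _ => hEi i
    have hA2 : (0:ℝ) ≤ A/2 := by positivity
    nlinarith [mul_le_mul_of_nonneg_left h3 hA2, hoffcard]
  -- relate the moments
  have hmom : moment P 2 = moment P 1 + (1/(A*A)) * T := by
    rw [moment, moment, S2_eq, mul_add, hT, hA]
    have : (4:ℝ)^d = 2^d * 2^d := by rw [← mul_pow]; norm_num
    rw [this]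
  have hzpow : (2:ℝ) ^ (-(d:ℤ)) = A⁻¹ := by
    rw [zpow_neg, zpow_natCast, hA]
  rw [hmom, hzpow]
  have hAne : A ≠ 0 := ne_of_gt hApos
  have key : (N:ℝ) * ((N:ℝ) - 1) * A⁻¹ + A⁻¹ * d * (2 * q * ((q:ℝ) - 1) + r * q)
      ≤ (1/(A*A)) * T := by
    have h4 : (1/(A*A)) * ((N:ℝ) * ((N:ℝ) - 1) * A + (A/2) * (d * (4*(q:ℝ)^2 - 4*q + 2*q*r)))
        ≤ (1/(A*A)) * T := by
      apply mul_le_mul_of_nonneg_left hTlb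
      positivity
    calc (N:ℝ) * ((N:ℝ) - 1) * A⁻¹ + A⁻¹ * d * (2 * q * ((q:ℝ) - 1) + r * q)
        = (1/(A*A)) * ((N:ℝ) * ((N:ℝ) - 1) * A + (A/2) * (d * (4*(q:ℝ)^2 - 4*q + 2*q*r))) := by
          field_simp
          ring
      _ ≤ (1/(A*A)) * T := h4
  linarith [key]
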